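/- Let m and n be integers with 1 ≤ m < n, let G_m > 0 and G_n > 0, and let P_m, P_n : ℝ → ℝ be functions satisfying P_m(ρ) - G_m·ρ^{-m} = o(ρ^{-m}) and P_n(ρ) - G_n·ρ^{-n} = o(ρ^{-n}) as ρ → ∞. Then lim_{ρ→∞} ( - log( P_m(ρ) + P_n(ρ) - P_m(ρ)·P_n(ρ) ) / log ρ ) = m. -/

import Mathlib

open Filter Real

theorem secrecy_diversity_order_of_pair (m n : ℕ) (hm : 1 ≤ m) (hmn : m < n)
    (Gm Gn : ℝ) (hGm : 0 < Gm) (hGn : 0 < Gn)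
    (Pm Pn : ℝ → ℝ)
    (hPm : Filter.Tendsto (fun ρ : ℝ => (Pm ρ - Gm * ρ ^ (-(m : ℝ))) / ρ ^ (-(m : ℝ)))
      Filter.atTop (nhds 0))
    (hPn : Filter.Tendsto (fun ρ : ℝ => (Pn ρ - Gn * ρ ^ (-(n : ℝ))) / ρ ^ (-(n : ℝ)))
      Filter.atTop (nhds 0)) :
    Filter.Tendsto
      (fun ρ : ℝ => -(Real.log (Pm ρ + Pn ρ - Pm ρ * Pn ρ)) / Real.log ρ)
      Filter.atTop (nhds m) := by
  have hev : ∀ᶠ ρ : ℝ in atTop, (0:ℝ) < ρ := eventually_gt_atTop 0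
  -- Pm / ρ^{-m} → Gm
  have h1 : Tendsto (fun ρ : ℝ => Pm ρ / ρ ^ (-(m:ℝ))) atTop (nhds Gm) := by
    have h := hPm.add_const Gm
    rw [zero_add] at h
    refine h.congr' ?_
    filter_upwards [hev] with ρ hρ
    have hne : ρ ^ (-(m:ℝ)) ≠ 0 := (Real.rpow_pos_of_pos hρ _).ne'
    field_simp
    ring
  -- Pn / ρ^{-n} → Gn
  have h2 : Tendsto (fun ρ : ℝ => Pn ρ / ρ ^ (-(n:ℝ))) atTop (nhds Gn) := by
    have h := hPn.add_const Gn
    rw [zero_add] at h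
    refine h.congr' ?_
    filter_upwards [hev] with ρ hρ
    have hne : ρ ^ (-(n:ℝ)) ≠ 0 := (Real.rpow_pos_of_pos hρ _).ne'
    field_simp
    ring
  have hrn : Tendsto (fun ρ : ℝ => ρ ^ (-(n:ℝ))) atTop (nhds 0) := by
    apply tendsto_rpow_neg_atTop
    exact_mod_cast Nat.zero_lt_of_lt hmn
  -- Pn → 0
  have hPn0 : Tendsto Pn atTop (nhds 0) := by
    have h := h2.mul hrn
    rw [mul_zero] at h
    refine h.congr' ?_
    filter_upwards [hev] with ρ hρ
    have hne : ρ ^ (-(n:ℝ)) ≠ 0 := (Real.rpow_pos_of_pos hρ _).ne'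
    exact div_mul_cancel₀ _ hne
  -- Pn / ρ^{-m} → 0
  have hPnm : Tendsto (fun ρ : ℝ => Pn ρ / ρ ^ (-(m:ℝ))) atTop (nhds 0) := by
    have hr : Tendsto (fun ρ : ℝ => ρ ^ (-((n:ℝ) - m))) atTop (nhds 0) := by
      apply tendsto_rpow_neg_atTop
      have : (m:ℝ) < n := by exact_mod_cast hmn
      linarith
    have h := h2.mul hr
    rw [mul_zero] at h
    refine h.congr' ?_
    filter_upwards [hev] with ρ hρ
    have hnem : ρ ^ (-(m:ℝ)) ≠ 0 := (Real.rpow_pos_of_pos hρ _).ne'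
    have hnen : ρ ^ (-(n:ℝ)) ≠ 0 := (Real.rpow_pos_of_pos hρ _).ne'
    have hsub : ρ ^ (-((n:ℝ) - m)) = ρ ^ (-(n:ℝ)) / ρ ^ (-(m:ℝ)) := by
      rw [← Real.rpow_sub hρ]
      ring_nf
    rw [hsub]
    field_simp
  -- Q / ρ^{-m} → Gm
  have hQ : Tendsto (fun ρ : ℝ =>
      (Pm ρ + Pn ρ - Pm ρ * Pn ρ) / ρ ^ (-(m:ℝ))) atTop (nhds Gm) := by
    have h := (h1.add hPnm).sub (h1.mul hPn0)
    rw [add_zero, mul_zero, sub_zero] at h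
    refine h.congr' ?_
    filter_upwards [hev] with ρ hρ
    have hne : ρ ^ (-(m:ℝ)) ≠ 0 := (Real.rpow_pos_of_pos hρ _).ne'
    field_simp
  have hQpos : ∀ᶠ ρ : ℝ in atTop,
      0 < (Pm ρ + Pn ρ - Pm ρ * Pn ρ) / ρ ^ (-(m:ℝ)) :=
    hQ.eventually (eventually_gt_nhds hGm)
  have hlogf : Tendsto (fun ρ : ℝ =>
      Real.log ((Pm ρ + Pn ρ - Pm ρ * Pn ρ) / ρ ^ (-(m:ℝ)))) atTop (nhds (Real.log Gm)) :=
    (Real.continuousAt_log hGm.ne').tendsto.comp hQ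
  have hinv : Tendsto (fun ρ : ℝ => (Real.log ρ)⁻¹) atTop (nhds 0) :=
    Real.tendsto_log_atTop.inv_tendsto_atTop
  have hfin := (tendsto_const_nhds (x := (m:ℝ)) (f := (atTop : Filter ℝ))).sub (hlogf.mul hinv)
  rw [mul_zero, sub_zero] at hfin
  refine hfin.congr' ?_
  filter_upwards [eventually_gt_atTop 1, hQpos] with ρ hρ1 hfpos
  have hρ : (0:ℝ) < ρ := lt_trans zero_lt_one hρ1
  have hlρ : 0 < Real.log ρ := Real.log_pos hρ1
  have hne : ρ ^ (-(m:ℝ)) ≠ 0 := (Real.rpow_pos_of_pos hρ _).ne'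
  have hQeq : Pm ρ + Pn ρ - Pm ρ * Pn ρ
      = ((Pm ρ + Pn ρ - Pm ρ * Pn ρ) / ρ ^ (-(m:ℝ))) * ρ ^ (-(m:ℝ)) :=
    (div_mul_cancel₀ _ hne).symm
  rw [hQeq, Real.log_mul hfpos.ne' hne, Real.log_rpow hρ]
  field_simp
  ring
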